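/- Let μ be a differentiable growth rate and let λ_s, λ_u, ν, ω, θ be real numbers with ν ≥ 0, ω ≥ 0, θ ≥ max{ν, ω}, λ_s < ν − θ and λ_u > θ − ω. Then for all τ ≤ t, ∫_τ^t (μ(t)/μ(κ))^{λ_s} μ(κ)^{sign(κ)(ν−θ)−1} μ'(κ) dκ ≤ 1/(−λ_s + ν − θ), and for all t ∈ ℝ, ∫_t^{+∞} (μ(t)/μ(κ))^{λ_u} μ(κ)^{sign(κ)(ω−θ)−1} μ'(κ) dκ ≤ 1/(λ_u − θ + ω). -/

import Mathlib

open MeasureTheory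

noncomputable section

lemma gr_deriv_nonneg (μ μ' : ℝ → ℝ) (hmono : Monotone μ)
    (hμ' : ∀ s, HasDerivAt μ (μ' s) s) : ∀ s, 0 ≤ μ' s := by
  intro s
  have h1 : Filter.Tendsto (slope μ s) (nhdsWithin s (Set.Ioi s)) (nhds (μ' s)) :=
    (hasDerivAt_iff_tendsto_slope.1 (hμ' s)).mono_left
      (nhdsWithin_mono s (fun x hx => ne_of_gt hx))
  refine ge_of_tendsto h1 ?_
  filter_upwards [self_mem_nhdsWithin] with x hx
  rw [slope_def_field]
  exact div_nonneg (sub_nonneg.2 (hmono hx.le)) (sub_nonneg.2 hx.le)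

lemma gr_int_Ioc (μ μ' : ℝ → ℝ) (hpos : ∀ s, 0 < μ s)
    (hμ' : ∀ s, HasDerivAt μ (μ' s) s) (hd : ∀ s, 0 ≤ μ' s)
    (p : ℝ) (hp : p ≠ 0) (τ t : ℝ) (h : τ ≤ t) :
    IntegrableOn (fun κ => μ κ ^ (p - 1) * μ' κ) (Set.Ioc τ t) ∧
      ∫ κ in Set.Ioc τ t, μ κ ^ (p - 1) * μ' κ = (μ t ^ p - μ τ ^ p) / p := by
  have hder : ∀ s, HasDerivAt (fun κ => μ κ ^ p / p) (μ s ^ (p - 1) * μ' s) s := by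
    intro s
    have h2 := ((hμ' s).rpow_const (p := p) (Or.inl (hpos s).ne')).div_const p
    refine h2.congr_deriv ?_
    rw [div_eq_iff hp]
    ring
  have hcont : ContinuousOn (fun κ => μ κ ^ p / p) (Set.Icc τ t) :=
    fun x _ => (hder x).continuousAt.continuousWithinAt
  have hnn : ∀ s, 0 ≤ μ s ^ (p - 1) * μ' s := fun s =>
    mul_nonneg (Real.rpow_nonneg (hpos s).le _) (hd s)
  have hint : IntegrableOn (fun κ => μ κ ^ (p - 1) * μ' κ) (Set.Ioc τ t) :=
    intervalIntegral.integrableOn_deriv_of_nonneg hcont (fun x _ => hder x) (fun x _ => hnn x)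
  refine ⟨hint, ?_⟩
  have heq := intervalIntegral.integral_eq_sub_of_hasDerivAt_of_le h hcont
    (fun x _ => hder x) ((intervalIntegrable_iff_integrableOn_Ioc_of_le h).2 hint)
  rw [intervalIntegral.integral_of_le h] at heq
  rw [heq]; ring

lemma gr_int_Ioi (μ μ' : ℝ → ℝ) (hpos : ∀ s, 0 < μ s)
    (hμ' : ∀ s, HasDerivAt μ (μ' s) s) (hd : ∀ s, 0 ≤ μ' s)
    (htop : Filter.Tendsto μ Filter.atTop Filter.atTop)
    (q : ℝ) (hq : 0 < q) (t : ℝ) :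
    IntegrableOn (fun κ => μ κ ^ (-q - 1) * μ' κ) (Set.Ioi t) ∧
      ∫ κ in Set.Ioi t, μ κ ^ (-q - 1) * μ' κ = μ t ^ (-q) / q := by
  have hder : ∀ s, HasDerivAt (fun κ => -(μ κ ^ (-q)) / q) (μ s ^ (-q - 1) * μ' s) s := by
    intro s
    have h2 := (((hμ' s).rpow_const (p := -q) (Or.inl (hpos s).ne')).neg).div_const q
    refine h2.congr_deriv ?_
    rw [div_eq_iff hq.ne']
    ring
  have hnn : ∀ s, 0 ≤ μ s ^ (-q - 1) * μ' s := fun s =>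
    mul_nonneg (Real.rpow_nonneg (hpos s).le _) (hd s)
  have hlim : Filter.Tendsto (fun κ => -(μ κ ^ (-q)) / q) Filter.atTop (nhds 0) := by
    have h1 : Filter.Tendsto (fun κ => μ κ ^ (-q)) Filter.atTop (nhds 0) :=
      (tendsto_rpow_neg_atTop hq).comp htop
    simpa using h1.neg.div_const q
  constructor
  · exact integrableOn_Ioi_deriv_of_nonneg' (fun x _ => hder x) (fun x _ => hnn x) hlim
  · rw [integral_Ioi_of_hasDerivAt_of_nonneg' (fun x _ => hder x) (fun x _ => hnn x) hlim]
    ring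

/-- `μ` is a growth rate: strictly increasing, positive, `μ 0 = 1`,
`μ(t) → +∞` as `t → +∞` and `μ(t) → 0` as `t → -∞`. -/
def IsGrowthRate (μ : ℝ → ℝ) : Prop :=
  StrictMono μ ∧ (∀ t, 0 < μ t) ∧ μ 0 = 1 ∧
    Filter.Tendsto μ Filter.atTop Filter.atTop ∧
    Filter.Tendsto μ Filter.atBot (nhds 0)

/-- key integral estimates for a differentiable growth rate. -/
theorem growth_rate_integral_estimates
    (μ μ' : ℝ → ℝ) (hμ : IsGrowthRate μ) (hμ' : ∀ t, HasDerivAt μ (μ' t) t)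
    (lams lamu ν ω θ : ℝ)
    (hν : 0 ≤ ν) (hω : 0 ≤ ω) (hθ : max ν ω ≤ θ)
    (hs : lams < ν - θ) (hu : θ - ω < lamu) :
    (∀ τ t : ℝ, τ ≤ t →
      (∫ κ in Set.Ioc τ t,
          (μ t / μ κ) ^ lams * μ κ ^ (Real.sign κ * (ν - θ) - 1) * μ' κ) ≤
        1 / (-lams + ν - θ)) ∧
    (∀ t : ℝ,
      (∫ κ in Set.Ioi t,
          (μ t / μ κ) ^ lamu * μ κ ^ (Real.sign κ * (ω - θ) - 1) * μ' κ) ≤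
        1 / (lamu - θ + ω)) := by
  obtain ⟨hSM, hpos, h0, htop, -⟩ := hμ
  have hmono : Monotone μ := hSM.monotone
  have hd : ∀ s, 0 ≤ μ' s := gr_deriv_nonneg μ μ' hmono hμ'
  have hθν : ν ≤ θ := le_trans (le_max_left _ _) hθ
  have hθω : ω ≤ θ := le_trans (le_max_right _ _) hθ
  constructor
  · -- first estimate
    intro τ t hτt
    have ha : (0:ℝ) < -lams + ν - θ := by linarith
    have hb : (0:ℝ) < -lams + θ - ν := by linarith
    have hab : -lams + ν - θ ≤ -lams + θ - ν := by linarith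
    have e1 : ∀ κ, (μ t / μ κ) ^ lams = μ t ^ lams * μ κ ^ (-lams) := by
      intro κ
      rw [Real.div_rpow (hpos t).le (hpos κ).le, Real.rpow_neg (hpos κ).le, div_eq_mul_inv]
    have Eneg : ∀ κ, κ ≤ 0 →
        (μ t / μ κ) ^ lams * μ κ ^ (Real.sign κ * (ν - θ) - 1) * μ' κ
          = μ t ^ lams * (μ κ ^ ((-lams + θ - ν) - 1) * μ' κ) := by
      intro κ hκ
      rcases lt_or_eq_of_le hκ with h | h
      · rw [e1 κ, Real.sign_of_neg h]
        have e2 : μ κ ^ (-lams) * μ κ ^ ((-1 : ℝ) * (ν - θ) - 1)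
            = μ κ ^ ((-lams + θ - ν) - 1) := by
          rw [← Real.rpow_add (hpos κ)]
          congr 1; ring
        calc μ t ^ lams * μ κ ^ (-lams) * μ κ ^ ((-1 : ℝ) * (ν - θ) - 1) * μ' κ
            = μ t ^ lams * ((μ κ ^ (-lams) * μ κ ^ ((-1 : ℝ) * (ν - θ) - 1)) * μ' κ) := by ring
          _ = _ := by rw [e2]
      · subst h
        simp [Real.sign_zero, h0]
    have Epos : ∀ κ, 0 < κ →
        (μ t / μ κ) ^ lams * μ κ ^ (Real.sign κ * (ν - θ) - 1) * μ' κ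
          = μ t ^ lams * (μ κ ^ ((-lams + ν - θ) - 1) * μ' κ) := by
      intro κ h
      rw [e1 κ, Real.sign_of_pos h]
      have e2 : μ κ ^ (-lams) * μ κ ^ ((1 : ℝ) * (ν - θ) - 1)
          = μ κ ^ ((-lams + ν - θ) - 1) := by
        rw [← Real.rpow_add (hpos κ)]
        congr 1; ring
      calc μ t ^ lams * μ κ ^ (-lams) * μ κ ^ ((1 : ℝ) * (ν - θ) - 1) * μ' κ
          = μ t ^ lams * ((μ κ ^ (-lams) * μ κ ^ ((1 : ℝ) * (ν - θ) - 1)) * μ' κ) := by ring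
        _ = _ := by rw [e2]
    by_cases ht0 : t ≤ 0
    · -- everything in the negative region
      have hμt1 : μ t ≤ 1 := by have := hmono ht0; rwa [h0] at this
      rw [setIntegral_congr_fun measurableSet_Ioc (fun κ hκ => Eneg κ (hκ.2.trans ht0)),
        integral_const_mul, (gr_int_Ioc μ μ' hpos hμ' hd _ hb.ne' τ t hτt).2]
      calc μ t ^ lams * ((μ t ^ (-lams + θ - ν) - μ τ ^ (-lams + θ - ν)) / (-lams + θ - ν))
          ≤ μ t ^ lams * (μ t ^ (-lams + θ - ν) / (-lams + θ - ν)) := by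
            refine mul_le_mul_of_nonneg_left ?_ (Real.rpow_nonneg (hpos t).le _)
            exact div_le_div_of_nonneg_right
              (by linarith [Real.rpow_nonneg (hpos τ).le (-lams + θ - ν)]) hb.le
        _ = μ t ^ (lams + (-lams + θ - ν)) / (-lams + θ - ν) := by
            rw [Real.rpow_add (hpos t)]; ring
        _ ≤ 1 / (-lams + θ - ν) :=
            div_le_div_of_nonneg_right
              (Real.rpow_le_one (hpos t).le hμt1 (by linarith)) hb.le
        _ ≤ 1 / (-lams + ν - θ) := one_div_le_one_div_of_le ha hab
    · by_cases hτ0 : 0 ≤ τ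
      · have h1t : 1 ≤ μ t := by
          have := hmono (hτ0.trans hτt); rwa [h0] at this
        rw [setIntegral_congr_fun measurableSet_Ioc
            (fun κ hκ => Epos κ (lt_of_le_of_lt hτ0 hκ.1)),
          integral_const_mul, (gr_int_Ioc μ μ' hpos hμ' hd _ ha.ne' τ t hτt).2]
        calc μ t ^ lams * ((μ t ^ (-lams + ν - θ) - μ τ ^ (-lams + ν - θ)) / (-lams + ν - θ))
            ≤ μ t ^ lams * (μ t ^ (-lams + ν - θ) / (-lams + ν - θ)) := by
              refine mul_le_mul_of_nonneg_left ?_ (Real.rpow_nonneg (hpos t).le _)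
              exact div_le_div_of_nonneg_right
                (by linarith [Real.rpow_nonneg (hpos τ).le (-lams + ν - θ)]) ha.le
          _ = μ t ^ (lams + (-lams + ν - θ)) / (-lams + ν - θ) := by
              rw [Real.rpow_add (hpos t)]; ring
          _ ≤ 1 / (-lams + ν - θ) :=
              div_le_div_of_nonneg_right
                (Real.rpow_le_one_of_one_le_of_nonpos h1t (by linarith)) ha.le
      · -- mixed case: τ < 0 < t
        have hτn : τ < 0 := lt_of_not_ge hτ0
        have htp : 0 < t := lt_of_not_ge ht0
        have hI1 := gr_int_Ioc μ μ' hpos hμ' hd _ hb.ne' τ 0 hτn.le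
        have hI2 := gr_int_Ioc μ μ' hpos hμ' hd _ ha.ne' 0 t htp.le
        have i1 : IntegrableOn
            (fun κ => (μ t / μ κ) ^ lams * μ κ ^ (Real.sign κ * (ν - θ) - 1) * μ' κ)
            (Set.Ioc τ 0) :=
          MeasureTheory.IntegrableOn.congr_fun (hI1.1.const_mul (μ t ^ lams))
            (fun κ hκ => (Eneg κ hκ.2).symm) measurableSet_Ioc
        have i2 : IntegrableOn
            (fun κ => (μ t / μ κ) ^ lams * μ κ ^ (Real.sign κ * (ν - θ) - 1) * μ' κ)
            (Set.Ioc 0 t) :=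
          MeasureTheory.IntegrableOn.congr_fun (hI2.1.const_mul (μ t ^ lams))
            (fun κ hκ => (Epos κ hκ.1).symm) measurableSet_Ioc
        rw [show Set.Ioc τ t = Set.Ioc τ 0 ∪ Set.Ioc 0 t from
            (Set.Ioc_union_Ioc_eq_Ioc hτn.le htp.le).symm,
          setIntegral_union (Set.Ioc_disjoint_Ioc_of_le le_rfl) measurableSet_Ioc i1 i2,
          setIntegral_congr_fun measurableSet_Ioc (fun κ hκ => Eneg κ hκ.2),
          setIntegral_congr_fun measurableSet_Ioc (fun κ hκ => Epos κ hκ.1),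
          integral_const_mul, integral_const_mul, hI1.2, hI2.2, h0]
        simp only [Real.one_rpow]
        have h1t : 1 ≤ μ t := by have := hmono htp.le; rwa [h0] at this
        have hμτ1 : μ τ ^ (-lams + θ - ν) ≤ 1 := by
          refine Real.rpow_le_one (hpos τ).le ?_ hb.le
          have := hmono hτn.le; rwa [h0] at this
        have hPQ : μ t ^ lams * μ t ^ (-lams + ν - θ) ≤ 1 := by
          rw [← Real.rpow_add (hpos t)]
          exact Real.rpow_le_one_of_one_le_of_nonpos h1t (by linarith)
        have hP : 0 ≤ μ t ^ lams := Real.rpow_nonneg (hpos t).le _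
        have hR : 0 ≤ μ τ ^ (-lams + θ - ν) := Real.rpow_nonneg (hpos τ).le _
        have h1R : (0:ℝ) ≤ 1 - μ τ ^ (-lams + θ - ν) := by linarith
        calc μ t ^ lams * ((1 - μ τ ^ (-lams + θ - ν)) / (-lams + θ - ν)) +
              μ t ^ lams * ((μ t ^ (-lams + ν - θ) - 1) / (-lams + ν - θ))
            ≤ μ t ^ lams * ((1 - μ τ ^ (-lams + θ - ν)) / (-lams + ν - θ)) +
              μ t ^ lams * ((μ t ^ (-lams + ν - θ) - 1) / (-lams + ν - θ)) := by
              have hstep := mul_le_mul_of_nonneg_left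
                (div_le_div_of_nonneg_left h1R ha hab) hP
              linarith
          _ = (μ t ^ lams * μ t ^ (-lams + ν - θ) -
                μ t ^ lams * μ τ ^ (-lams + θ - ν)) / (-lams + ν - θ) := by ring
          _ ≤ 1 / (-lams + ν - θ) :=
              div_le_div_of_nonneg_right (by nlinarith [mul_nonneg hP hR]) ha.le
  · -- second estimate
    intro t
    have hc : (0:ℝ) < lamu - θ + ω := by linarith
    have hb2 : (0:ℝ) < lamu + θ - ω := by linarith
    have hcb : lamu - θ + ω ≤ lamu + θ - ω := by linarith
    have e1 : ∀ κ, (μ t / μ κ) ^ lamu = μ t ^ lamu * μ κ ^ (-lamu) := by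
      intro κ
      rw [Real.div_rpow (hpos t).le (hpos κ).le, Real.rpow_neg (hpos κ).le, div_eq_mul_inv]
    have Eneg : ∀ κ, κ ≤ 0 →
        (μ t / μ κ) ^ lamu * μ κ ^ (Real.sign κ * (ω - θ) - 1) * μ' κ
          = μ t ^ lamu * (μ κ ^ (-(lamu - θ + ω) - 1) * μ' κ) := by
      intro κ hκ
      rcases lt_or_eq_of_le hκ with h | h
      · rw [e1 κ, Real.sign_of_neg h]
        have e2 : μ κ ^ (-lamu) * μ κ ^ ((-1 : ℝ) * (ω - θ) - 1)
            = μ κ ^ (-(lamu - θ + ω) - 1) := by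
          rw [← Real.rpow_add (hpos κ)]
          congr 1; ring
        calc μ t ^ lamu * μ κ ^ (-lamu) * μ κ ^ ((-1 : ℝ) * (ω - θ) - 1) * μ' κ
            = μ t ^ lamu * ((μ κ ^ (-lamu) * μ κ ^ ((-1 : ℝ) * (ω - θ) - 1)) * μ' κ) := by ring
          _ = _ := by rw [e2]
      · subst h
        simp [Real.sign_zero, h0]
    have Epos : ∀ κ, 0 < κ →
        (μ t / μ κ) ^ lamu * μ κ ^ (Real.sign κ * (ω - θ) - 1) * μ' κ
          = μ t ^ lamu * (μ κ ^ (-(lamu + θ - ω) - 1) * μ' κ) := by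
      intro κ h
      rw [e1 κ, Real.sign_of_pos h]
      have e2 : μ κ ^ (-lamu) * μ κ ^ ((1 : ℝ) * (ω - θ) - 1)
          = μ κ ^ (-(lamu + θ - ω) - 1) := by
        rw [← Real.rpow_add (hpos κ)]
        congr 1; ring
      calc μ t ^ lamu * μ κ ^ (-lamu) * μ κ ^ ((1 : ℝ) * (ω - θ) - 1) * μ' κ
          = μ t ^ lamu * ((μ κ ^ (-lamu) * μ κ ^ ((1 : ℝ) * (ω - θ) - 1)) * μ' κ) := by ring
        _ = _ := by rw [e2]
    by_cases ht0 : 0 ≤ t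
    · have h1t : 1 ≤ μ t := by have := hmono ht0; rwa [h0] at this
      rw [setIntegral_congr_fun measurableSet_Ioi
          (fun κ hκ => Epos κ (lt_of_le_of_lt ht0 hκ)),
        integral_const_mul, (gr_int_Ioi μ μ' hpos hμ' hd htop _ hb2 t).2]
      calc μ t ^ lamu * (μ t ^ (-(lamu + θ - ω)) / (lamu + θ - ω))
          = μ t ^ (lamu + -(lamu + θ - ω)) / (lamu + θ - ω) := by
            rw [Real.rpow_add (hpos t)]; ring
        _ ≤ 1 / (lamu + θ - ω) :=
            div_le_div_of_nonneg_right
              (Real.rpow_le_one_of_one_le_of_nonpos h1t (by linarith)) hb2.le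
        _ ≤ 1 / (lamu - θ + ω) := one_div_le_one_div_of_le hc hcb
    · have htn : t < 0 := lt_of_not_ge ht0
      have hμt1 : μ t ≤ 1 := by have := hmono htn.le; rwa [h0] at this
      have hpne : -(lamu - θ + ω) ≠ 0 := neg_ne_zero.2 hc.ne'
      have hI1 := gr_int_Ioc μ μ' hpos hμ' hd _ hpne t 0 htn.le
      have hI2 := gr_int_Ioi μ μ' hpos hμ' hd htop _ hb2 0
      have i1 : IntegrableOn
          (fun κ => (μ t / μ κ) ^ lamu * μ κ ^ (Real.sign κ * (ω - θ) - 1) * μ' κ)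
          (Set.Ioc t 0) :=
        MeasureTheory.IntegrableOn.congr_fun (hI1.1.const_mul (μ t ^ lamu))
          (fun κ hκ => (Eneg κ hκ.2).symm) measurableSet_Ioc
      have i2 : IntegrableOn
          (fun κ => (μ t / μ κ) ^ lamu * μ κ ^ (Real.sign κ * (ω - θ) - 1) * μ' κ)
          (Set.Ioi 0) :=
        MeasureTheory.IntegrableOn.congr_fun (hI2.1.const_mul (μ t ^ lamu))
          (fun κ hκ => (Epos κ hκ).symm) measurableSet_Ioi
      rw [show Set.Ioi t = Set.Ioc t 0 ∪ Set.Ioi 0 from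
          (Set.Ioc_union_Ioi_eq_Ioi htn.le).symm,
        setIntegral_union Set.Ioc_disjoint_Ioi_same measurableSet_Ioi i1 i2,
        setIntegral_congr_fun measurableSet_Ioc (fun κ hκ => Eneg κ hκ.2),
        setIntegral_congr_fun measurableSet_Ioi (fun κ hκ => Epos κ hκ),
        integral_const_mul, integral_const_mul, hI1.2, hI2.2, h0]
      simp only [Real.one_rpow]
      have hPS : μ t ^ lamu * μ t ^ (-(lamu - θ + ω)) ≤ 1 := by
        rw [← Real.rpow_add (hpos t)]
        exact Real.rpow_le_one (hpos t).le hμt1 (by linarith)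
      have hP : 0 ≤ μ t ^ lamu := Real.rpow_nonneg (hpos t).le _
      have ediv : (1 - μ t ^ (-(lamu - θ + ω))) / (-(lamu - θ + ω))
          = (μ t ^ (-(lamu - θ + ω)) - 1) / (lamu - θ + ω) := by
        rw [div_neg]; ring
      rw [ediv]
      calc μ t ^ lamu * ((μ t ^ (-(lamu - θ + ω)) - 1) / (lamu - θ + ω)) +
            μ t ^ lamu * (1 / (lamu + θ - ω))
          ≤ μ t ^ lamu * ((μ t ^ (-(lamu - θ + ω)) - 1) / (lamu - θ + ω)) +
            μ t ^ lamu * (1 / (lamu - θ + ω)) := by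
            have hstep := mul_le_mul_of_nonneg_left
              (one_div_le_one_div_of_le hc hcb) hP
            linarith
        _ = (μ t ^ lamu * μ t ^ (-(lamu - θ + ω))) / (lamu - θ + ω) := by ring
        _ ≤ 1 / (lamu - θ + ω) := div_le_div_of_nonneg_right hPS hc.le
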